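/- Every Σ-formula is a self-prover in QGL: if S is a Σ-formula then QGL proves S → □S. More precisely: ⊤ and all formulas of the form □A are self-provers, and the class of self-provers is closed under conjunction, disjunction, and existential quantification. -/

import Mathlib

namespace PML

/-- Formulas of predicate modal logic, with propositional variables (language L''). -/
inductive Fml : Type
  | verum : Fml
  | falsum : Fml
  | pvar (q : ℕ) : Fml
  | pred (P : ℕ) (args : List ℕ) : Fml
  | neg (A : Fml) : Fml
  | imp (A B : Fml) : Fml
  | all (u : ℕ) (A : Fml) : Fml
  | box (A : Fml) : Fml

namespace Fml

def lor (A B : Fml) : Fml := A.neg.imp B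
def land (A B : Fml) : Fml := (A.imp B.neg).neg
def iff (A B : Fml) : Fml := (A.imp B).land (B.imp A)
def ex (u : ℕ) (A : Fml) : Fml := (Fml.all u A.neg).neg
def boxdot (A : Fml) : Fml := A.box.land A

def boxIter : ℕ → Fml → Fml
  | 0, A => A
  | n + 1, A => (boxIter n A).box

/-- Free variables. -/
def free : Fml → Finset ℕ
  | pred _ args => args.toFinset
  | neg A => A.free
  | imp A B => A.free ∪ B.free
  | all u A => A.free.erase u
  | box A => A.free
  | _ => ∅

/-- Bound variables. -/
def bound : Fml → Finset ℕ
  | neg A => A.bound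
  | imp A B => A.bound ∪ B.bound
  | all u A => insert u A.bound
  | box A => A.bound
  | _ => ∅

/-- Propositional variables occurring in a formula. -/
def pvars : Fml → Finset ℕ
  | pvar q => {q}
  | neg A => A.pvars
  | imp A B => A.pvars ∪ B.pvars
  | all _ A => A.pvars
  | box A => A.pvars
  | _ => ∅

/-- Predicate symbols occurring in a formula. -/
def preds : Fml → Finset ℕ
  | pred P _ => {P}
  | neg A => A.preds
  | imp A B => A.preds ∪ B.preds
  | all _ A => A.preds
  | box A => A.preds
  | _ => ∅

/-- Predicate symbols together with the arity they are used with. -/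
def predSig : Fml → Finset (ℕ × ℕ)
  | pred P args => {(P, args.length)}
  | neg A => A.predSig
  | imp A B => A.predSig ∪ B.predSig
  | all _ A => A.predSig
  | box A => A.predSig
  | _ => ∅

/-- Rename free occurrences of the variable `u` to `v`. -/
def rename : Fml → ℕ → ℕ → Fml
  | pred P args, u, v => pred P (args.map fun x => if x = u then v else x)
  | neg A, u, v => (A.rename u v).neg
  | imp A B, u, v => (A.rename u v).imp (B.rename u v)
  | all w A, u, v => if w = u then all w A else all w (A.rename u v)
  | box A, u, v => (A.rename u v).box
  | A, _, _ => A

/-- Substitution of a formula for a propositional variable. -/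
def psub : Fml → ℕ → Fml → Fml
  | pvar q, p, B => if q = p then B else pvar q
  | neg A, p, B => (A.psub p B).neg
  | imp A C, p, B => (A.psub p B).imp (C.psub p B)
  | all u A, p, B => all u (A.psub p B)
  | box A, p, B => (A.psub p B).box
  | A, _, _ => A

/-- Simultaneous substitution of formulas for all propositional variables. -/
def msub : Fml → (ℕ → Fml) → Fml
  | pvar q, σ => σ q
  | neg A, σ => (A.msub σ).neg
  | imp A C, σ => (A.msub σ).imp (C.msub σ)
  | all u A, σ => all u (A.msub σ)
  | box A, σ => (A.msub σ).box
  | A, _ => A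

/-- Depth-indexed substitution: occurrences of `p` at modal depth `i` are replaced by `σ i`. -/
def dsub : Fml → ℕ → (ℕ → Fml) → Fml
  | pvar q, p, σ => if q = p then σ 0 else pvar q
  | neg A, p, σ => (A.dsub p σ).neg
  | imp A C, p, σ => (A.dsub p σ).imp (C.dsub p σ)
  | all u A, p, σ => all u (A.dsub p σ)
  | box A, p, σ => (A.dsub p (fun i => σ (i + 1))).box
  | A, _, _ => A

/-- `A(p)[B_0,…,B_k]` for a list `[B_0,…,B_k]`. -/
def dsubL (A : Fml) (p : ℕ) (L : List Fml) : Fml := A.dsub p (fun i => L.getD i verum)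

/-- `A^{⊤(n)}`: replace every boxed subformula at modal depth `n` by `⊤`. -/
def eraseT : ℕ → Fml → Fml
  | 0, box _ => verum
  | n + 1, box A => (eraseT n A).box
  | n, neg A => (eraseT n A).neg
  | n, imp A B => (eraseT n A).imp (eraseT n B)
  | n, all u A => all u (eraseT n A)
  | _, A => A

/-- `occursAt p A d`: the propositional variable `p` occurs in `A` at modal depth `d`. -/
def occursAt (p : ℕ) : Fml → ℕ → Prop
  | pvar q, d => q = p ∧ d = 0
  | neg A, d => occursAt p A d
  | imp A B, d => occursAt p A d ∨ occursAt p B d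
  | all _ A, d => occursAt p A d
  | box A, d => ∃ d', d = d' + 1 ∧ occursAt p A d'
  | _, _ => False

/-- `A` is modalized in `p`: no occurrence of `p` at depth `0`. -/
def Modalized (p : ℕ) (A : Fml) : Prop := ¬ occursAt p A 0

/-- Conjunction of a list of formulas. -/
def conj : List Fml → Fml
  | [] => verum
  | A :: L => A.land (conj L)

/-- The canonical fixed-point sequence:
`A_0 := A^{⊤(0)}(p)[⊤]`, `A_{k+1} := A^{⊤(k+1)}(p)[⊤, A_k, …, A_0]`. -/
def fpSeq (p : ℕ) (A : Fml) : ℕ → Fml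
  | 0 => (eraseT 0 A).dsub p (fun _ => verum)
  | n + 1 => (eraseT (n + 1) A).dsub p
      (fun i => match i with
        | 0 => verum
        | j + 1 => fpSeq p A (n - j))
  termination_by k => k
  decreasing_by omega

end Fml

open Fml

/-- Axioms of predicate logic, together with the modal distribution axiom K. -/
inductive Ax : Fml → Prop
  | imp1 (A B : Fml) : Ax (A.imp (B.imp A))
  | imp2 (A B C : Fml) : Ax ((A.imp (B.imp C)).imp ((A.imp B).imp (A.imp C)))
  | contra (A B : Fml) : Ax ((A.neg.imp B.neg).imp (B.imp A))
  | verum : Ax Fml.verum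
  | exfalso (A : Fml) : Ax (Fml.falsum.imp A)
  | negE (A : Fml) : Ax (A.neg.imp (A.imp Fml.falsum))
  | negI (A : Fml) : Ax ((A.imp Fml.falsum).imp A.neg)
  | allE (A : Fml) (u v : ℕ) (h : v ∉ A.bound) : Ax ((Fml.all u A).imp (A.rename u v))
  | allK (A B : Fml) (u : ℕ) :
      Ax ((Fml.all u (A.imp B)).imp ((Fml.all u A).imp (Fml.all u B)))
  | allV (A : Fml) (u : ℕ) (h : u ∉ A.free) : Ax (A.imp (Fml.all u A))
  | k (A B : Fml) : Ax (((A.imp B).box).imp (A.box.imp B.box))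

/-- Hilbert-style provability from the base axioms plus extra axioms `Ext`,
closed under modus ponens, necessitation and generalization. -/
inductive Prf (Ext : Fml → Prop) : Fml → Prop
  | ax {A : Fml} : Ax A → Prf Ext A
  | ext {A : Fml} : Ext A → Prf Ext A
  | mp {A B : Fml} : Prf Ext (A.imp B) → Prf Ext A → Prf Ext B
  | nec {A : Fml} : Prf Ext A → Prf Ext A.box
  | gen {A : Fml} (u : ℕ) : Prf Ext A → Prf Ext (Fml.all u A)

/-- The smallest normal predicate modal logic QK. -/
def QK : Fml → Prop := Prf (fun _ => False)

inductive Ax4 : Fml → Prop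
  | four (A : Fml) : Ax4 (A.box.imp A.box.box)

/-- QK4 : QK plus the axiom 4. -/
def QK4 : Fml → Prop := Prf Ax4

inductive AxL : Fml → Prop
  | lob (A : Fml) : AxL (((A.box.imp A).box).imp A.box)

/-- QGL : QK plus Löb's axiom. -/
def QGL : Fml → Prop := Prf AxL

/-- NQGL : QK4 plus the infinitary rule BL. -/
inductive NQGL : Fml → Prop
  | ax {A : Fml} : Ax A → NQGL A
  | four (A : Fml) : NQGL (A.box.imp A.box.box)
  | mp {A B : Fml} : NQGL (A.imp B) → NQGL A → NQGL B
  | nec {A : Fml} : NQGL A → NQGL A.box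
  | gen {A : Fml} (u : ℕ) : NQGL A → NQGL (Fml.all u A)
  | bl {A : Fml} : (∀ n : ℕ, NQGL ((boxIter (n + 1) Fml.falsum).imp A)) → NQGL A

/-- Σ-formulas. -/
inductive IsSigma : Fml → Prop
  | box (A : Fml) : IsSigma A.box
  | lor {A B : Fml} : IsSigma A → IsSigma B → IsSigma (A.lor B)
  | land {A B : Fml} : IsSigma A → IsSigma B → IsSigma (A.land B)
  | ex {A : Fml} (u : ℕ) : IsSigma A → IsSigma (Fml.ex u A)

/- ## Kripke semantics -/

structure KFrame where
  W : Type
  R : W → W → Prop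
  Dom : Type
  D : W → Set Dom
  Dne : ∀ w, (D w).Nonempty
  mono : ∀ {w w'}, R w w' → D w ⊆ D w'

structure KModel extends KFrame where
  I : W → ℕ → List Dom → Prop
  V : W → ℕ → Prop

def Sat (M : KModel) : Fml → M.W → (ℕ → M.Dom) → Prop
  | .verum, _, _ => True
  | .falsum, _, _ => False
  | .pvar q, w, _ => M.V w q
  | .pred P args, w, ρ => M.I w P (args.map ρ)
  | .neg A, w, ρ => ¬ Sat M A w ρ
  | .imp A B, w, ρ => Sat M A w ρ → Sat M B w ρ
  | .all u A, w, ρ => ∀ a ∈ M.D w, Sat M A w (Function.update ρ u a)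
  | .box A, w, ρ => ∀ v, M.R w v → Sat M A v ρ

/-- Validity in a model. -/
def MVal (M : KModel) (A : Fml) : Prop :=
  ∀ (w : M.W) (ρ : ℕ → M.Dom), (∀ x, ρ x ∈ M.D w) → Sat M A w ρ

/-- Validity on a frame. -/
def FVal (F : KFrame) (A : Fml) : Prop :=
  ∀ (I : F.W → ℕ → List F.Dom → Prop) (V : F.W → ℕ → Prop),
    MVal { toKFrame := F, I := I, V := V } A

/-- Smoryński's model. -/
def MS : KModel where
  W := ℕ
  R := fun m n => n < m
  Dom := ℕ
  D := fun n => {m | n ≤ m}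
  Dne := fun n => ⟨n, le_refl n⟩
  mono := by intro w w' h x hx; simp only [Set.mem_setOf_eq] at *; omega
  I := fun w P L => P = 0 ∧ ∀ m ∈ L, m ≠ w + 1
  V := fun _ _ => False

/-- The finite truncations of Smoryński's model. -/
def Mk (k : ℕ) : KModel where
  W := Fin (k + 1)
  R := fun m n => (n : ℕ) < (m : ℕ)
  Dom := ℕ
  D := fun n => {m | (n : ℕ) ≤ m ∧ m ≤ k + 2}
  Dne := fun n => ⟨(n : ℕ), by simp only [Set.mem_setOf_eq]; have := n.isLt; omega⟩
  mono := by intro w w' h x hx; simp only [Set.mem_setOf_eq] at *; omega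
  I := fun w P L => P = 0 ∧ ∀ m ∈ L, m ≠ (w : ℕ) + 1
  V := fun _ _ => False

/-- `A` contains only the unary predicate symbol `P` (coded `0`) and no propositional variables. -/
def OnlyP (A : Fml) : Prop := A.predSig ⊆ {(0, 1)} ∧ A.pvars = ∅

/-- The atomic formula `P(u)`. -/
def Pat (u : ℕ) : Fml := Fml.pred 0 [u]

/-- `h(F) ≤ n`: there is no chain of `n+1` successive `R`-steps. -/
def HeightLe (F : KFrame) (n : ℕ) : Prop :=
  ∀ c : ℕ → F.W, ¬ ∀ i < n + 1, F.R (c i) (c (i + 1))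

end PML
namespace PML
namespace Aux
open Fml

variable {Ext : Fml → Prop}

/-! ### Basic Hilbert derivations -/

theorem pid (A : Fml) : Prf Ext (A.imp A) := by
  have h1 : Prf Ext ((A.imp ((A.imp A).imp A)).imp ((A.imp (A.imp A)).imp (A.imp A))) :=
    Prf.ax (Ax.imp2 _ _ _)
  have h2 : Prf Ext (A.imp ((A.imp A).imp A)) := Prf.ax (Ax.imp1 _ _)
  have h3 : Prf Ext (A.imp (A.imp A)) := Prf.ax (Ax.imp1 _ _)
  exact Prf.mp (Prf.mp h1 h2) h3

/-- `chain Γ A` : hypotheses of `Γ`, innermost first. -/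
def chain : List Fml → Fml → Fml
  | [], A => A
  | B :: Γ, A => chain Γ (B.imp A)

/-- Provability from hypotheses. -/
def Hyp (Ext : Fml → Prop) (Γ : List Fml) (A : Fml) : Prop := Prf Ext (chain Γ A)

theorem Hyp.weaken : ∀ {Γ : List Fml} {A : Fml}, Prf Ext A → Hyp Ext Γ A
  | [], _, h => h
  | C :: Γ, A, h =>
    show Hyp Ext Γ (C.imp A) from Hyp.weaken (Prf.mp (Prf.ax (Ax.imp1 A C)) h)

theorem Hyp.mp : ∀ {Γ : List Fml} {A B : Fml},
    Hyp Ext Γ (A.imp B) → Hyp Ext Γ A → Hyp Ext Γ B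
  | [], _, _, h1, h2 => Prf.mp h1 h2
  | C :: Γ, A, B, h1, h2 =>
    Hyp.mp (Γ := Γ) (Hyp.mp (Γ := Γ) (Hyp.weaken (Prf.ax (Ax.imp2 C A B))) h1) h2

theorem Hyp.assum : ∀ {Γ : List Fml} {A : Fml}, A ∈ Γ → Hyp Ext Γ A
  | C :: Γ, A, h => by
    rcases List.mem_cons.1 h with h | h
    · subst h
      exact Hyp.weaken (Γ := Γ) (pid A)
    · exact Hyp.mp (Γ := Γ) (Hyp.weaken (Prf.ax (Ax.imp1 A C))) (Hyp.assum h)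

/-- introduce / discharge a hypothesis (definitional). -/
theorem Hyp.intro' {Γ : List Fml} {A B : Fml} (h : Hyp Ext (A :: Γ) B) :
    Hyp Ext Γ (A.imp B) := h

theorem Hyp.ax {Γ : List Fml} {A : Fml} (h : Ax A) : Hyp Ext Γ A :=
  Hyp.weaken (Prf.ax h)

theorem ptrans {A B C : Fml} (h1 : Prf Ext (A.imp B)) (h2 : Prf Ext (B.imp C)) :
    Prf Ext (A.imp C) := by
  show Hyp Ext [] (A.imp C)
  refine Hyp.intro' ?_
  exact Hyp.mp (Hyp.weaken h2) (Hyp.mp (Hyp.weaken h1) (Hyp.assum (by simp)))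

/-! ### Propositional lemmas -/

theorem dni (A : Fml) : Prf Ext (A.imp A.neg.neg) := by
  show Hyp Ext [] (A.imp A.neg.neg)
  refine Hyp.intro' ?_
  refine Hyp.mp (Hyp.ax (Ax.negI A.neg)) (Hyp.intro' ?_)
  exact Hyp.mp (Hyp.mp (Hyp.ax (Ax.negE A)) (Hyp.assum (by simp))) (Hyp.assum (by simp))

theorem dne (A : Fml) : Prf Ext (A.neg.neg.imp A) :=
  Prf.mp (Prf.ax (Ax.contra A A.neg.neg)) (dni A.neg)

/-- contraposition rule. -/
theorem ctr {A B : Fml} (h : Prf Ext (A.imp B)) : Prf Ext (B.neg.imp A.neg) := by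
  show Hyp Ext [] (B.neg.imp A.neg)
  refine Hyp.intro' ?_
  refine Hyp.mp (Hyp.ax (Ax.negI A)) (Hyp.intro' ?_)
  exact Hyp.mp (Hyp.mp (Hyp.ax (Ax.negE B)) (Hyp.assum (by simp)))
    (Hyp.mp (Hyp.weaken h) (Hyp.assum (by simp)))

/-- inverse contraposition rule. -/
theorem ctr' {A B : Fml} (h : Prf Ext (A.neg.imp B.neg)) : Prf Ext (B.imp A) :=
  Prf.mp (Prf.ax (Ax.contra A B)) h

theorem and_left (A B : Fml) : Prf Ext ((A.land B).imp A) := by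
  refine ctr' ?_
  show Hyp Ext [] (A.neg.imp (A.imp B.neg).neg.neg)
  refine Hyp.intro' ?_
  refine Hyp.mp (Hyp.weaken (dni (A.imp B.neg))) (Hyp.intro' ?_)
  exact Hyp.mp (Hyp.ax (Ax.exfalso B.neg))
    (Hyp.mp (Hyp.mp (Hyp.ax (Ax.negE A)) (Hyp.assum (by simp))) (Hyp.assum (by simp)))

theorem and_right (A B : Fml) : Prf Ext ((A.land B).imp B) := by
  refine ctr' ?_
  show Hyp Ext [] (B.neg.imp (A.imp B.neg).neg.neg)
  refine Hyp.intro' ?_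
  refine Hyp.mp (Hyp.weaken (dni (A.imp B.neg))) (Hyp.intro' ?_)
  exact Hyp.assum (by simp)

theorem pair (A B : Fml) : Prf Ext (A.imp (B.imp (A.land B))) := by
  show Hyp Ext [] (A.imp (B.imp (A.imp B.neg).neg))
  refine Hyp.intro' (Hyp.intro' ?_)
  refine Hyp.mp (Hyp.ax (Ax.negI (A.imp B.neg))) (Hyp.intro' ?_)
  exact Hyp.mp
    (Hyp.mp (Hyp.ax (Ax.negE B))
      (Hyp.mp (Hyp.assum (A := A.imp B.neg) (by simp)) (Hyp.assum (A := A) (by simp))))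
    (Hyp.assum (A := B) (by simp))

theorem inl (A B : Fml) : Prf Ext (A.imp (A.lor B)) := by
  show Hyp Ext [] (A.imp (A.neg.imp B))
  refine Hyp.intro' (Hyp.intro' ?_)
  exact Hyp.mp (Hyp.ax (Ax.exfalso B))
    (Hyp.mp (Hyp.mp (Hyp.ax (Ax.negE A)) (Hyp.assum (by simp))) (Hyp.assum (by simp)))

theorem inr (A B : Fml) : Prf Ext (B.imp (A.lor B)) := by
  show Prf Ext (B.imp (A.neg.imp B))
  exact Prf.ax (Ax.imp1 B A.neg)

theorem por_elim {A B C : Fml} (h1 : Prf Ext (A.imp C)) (h2 : Prf Ext (B.imp C)) :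
    Prf Ext ((A.lor B).imp C) := by
  show Hyp Ext [] ((A.neg.imp B).imp C)
  refine Hyp.intro' ?_
  refine Hyp.mp (Hyp.weaken (dne C)) ?_
  refine Hyp.mp (Hyp.ax (Ax.negI C.neg)) (Hyp.intro' ?_)
  refine Hyp.mp (Hyp.mp (Hyp.ax (Ax.negE C)) (Hyp.assum (by simp))) ?_
  refine Hyp.mp (Hyp.weaken h2) ?_
  exact Hyp.mp (Hyp.assum (A := A.neg.imp B) (by simp))
    (Hyp.mp (Hyp.weaken (ctr h1)) (Hyp.assum (A := C.neg) (by simp)))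

end Aux
end PML
namespace PML
namespace Aux
open Fml

variable {Ext : Fml → Prop}

/-! ### Modal / quantifier rules -/

theorem boxK {A B : Fml} (h : Prf Ext (A.imp B)) : Prf Ext (A.box.imp B.box) :=
  Prf.mp (Prf.ax (Ax.k A B)) (Prf.nec h)

theorem allK' {A B : Fml} (u : ℕ) (h : Prf Ext (A.imp B)) :
    Prf Ext ((Fml.all u A).imp (Fml.all u B)) :=
  Prf.mp (Prf.ax (Ax.allK A B u)) (Prf.gen u h)

theorem impCongr {A A' B B' : Fml} (h1 : Prf Ext (A'.imp A)) (h2 : Prf Ext (B.imp B')) :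
    Prf Ext ((A.imp B).imp (A'.imp B')) := by
  show Hyp Ext [] ((A.imp B).imp (A'.imp B'))
  refine Hyp.intro' (Hyp.intro' ?_)
  refine Hyp.mp (Hyp.weaken h2) ?_
  exact Hyp.mp (Hyp.assum (A := A.imp B) (by simp))
    (Hyp.mp (Hyp.weaken h1) (Hyp.assum (A := A') (by simp)))

/-! ### Syntactic facts about renaming -/

theorem rename_self (B : Fml) (u : ℕ) : B.rename u u = B := by
  induction B with
  | pred P args =>
    simp only [Fml.rename]
    rw [List.map_congr_left (g := id) (fun x _ => by by_cases h : x = u <;> simp [h])]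
    simp
  | all w C ih => simp [Fml.rename, ih]
  | _ => simp [Fml.rename, *]

theorem bound_rename (B : Fml) (u v : ℕ) : (B.rename u v).bound = B.bound := by
  induction B with
  | all w C ih =>
    by_cases h : w = u <;> simp [Fml.rename, h, Fml.bound, ih]
  | _ => simp [Fml.rename, Fml.bound, *]

theorem rename_not_mem {B : Fml} {v : ℕ} (w : ℕ) (hf : v ∉ B.free) (hb : v ∉ B.bound) :
    B.rename v w = B := by
  induction B with
  | pred P args =>
    simp only [Fml.free, List.mem_toFinset] at hf
    simp only [Fml.rename]
    rw [List.map_congr_left (g := id) (fun x hx => by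
      have : x ≠ v := fun h => hf (h ▸ hx)
      simp [this])]
    simp
  | neg C ih => simp only [Fml.free, Fml.bound] at hf hb; simp [Fml.rename, ih hf hb]
  | imp C D ih1 ih2 =>
    simp only [Fml.free, Fml.bound, Finset.mem_union] at hf hb
    push_neg at hf hb
    simp [Fml.rename, ih1 hf.1 hb.1, ih2 hf.2 hb.2]
  | box C ih => simp only [Fml.free, Fml.bound] at hf hb; simp [Fml.rename, ih hf hb]
  | all x C ih =>
    simp only [Fml.free, Fml.bound, Finset.mem_insert, Finset.mem_erase] at hf hb
    push_neg at hf hb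
    have hxv : x ≠ v := fun h => hb.1 h.symm
    have hfC : v ∉ C.free := fun h => hf hxv.symm h
    simp [Fml.rename, hxv.symm, ih hfC hb.2]
  | _ => simp [Fml.rename]

theorem rename_rename_cancel {B : Fml} {u v : ℕ} (hf : v ∉ B.free) (hb : v ∉ B.bound)
    (hvu : v ≠ u) : (B.rename u v).rename v u = B := by
  induction B with
  | pred P args =>
    simp only [Fml.free, List.mem_toFinset] at hf
    simp only [Fml.rename, List.map_map]
    rw [List.map_congr_left (g := id) (fun x hx => by
      have hxv : x ≠ v := fun h => hf (h ▸ hx)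
      by_cases h : x = u <;> simp [h, Function.comp, hxv, hvu.symm])]
    simp
  | neg C ih => simp only [Fml.free, Fml.bound] at hf hb; simp [Fml.rename, ih hf hb]
  | imp C D ih1 ih2 =>
    simp only [Fml.free, Fml.bound, Finset.mem_union] at hf hb
    push_neg at hf hb
    simp [Fml.rename, ih1 hf.1 hb.1, ih2 hf.2 hb.2]
  | box C ih => simp only [Fml.free, Fml.bound] at hf hb; simp [Fml.rename, ih hf hb]
  | all x C ih =>
    simp only [Fml.free, Fml.bound, Finset.mem_insert, Finset.mem_erase] at hf hb
    push_neg at hf hb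
    have hxv : x ≠ v := fun h => hb.1 h.symm
    have hfC : v ∉ C.free := fun h => hf hxv.symm h
    by_cases h : x = u
    · subst h
      have h1 : (Fml.all x C).rename x v = Fml.all x C := by simp [Fml.rename]
      have h2 : (Fml.all x C).rename v x = Fml.all x C := by
        simp [Fml.rename, hxv, rename_not_mem x hfC hb.2]
      rw [h1, h2]
    · simp [Fml.rename, h, hxv, ih hfC hb.2]
  | _ => simp [Fml.rename]

theorem mem_free_rename {B : Fml} {u v a : ℕ} (h : a ∈ (B.rename u v).free) :
    a = v ∨ (a ∈ B.free ∧ a ≠ u) := by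
  induction B with
  | pred P args =>
    simp only [Fml.rename, Fml.free, List.mem_toFinset, List.mem_map] at h ⊢
    obtain ⟨x, hx, hxa⟩ := h
    by_cases hxu : x = u
    · simp [hxu] at hxa; left; omega
    · simp [hxu] at hxa; right; exact ⟨hxa ▸ hx, hxa ▸ hxu⟩
  | neg C ih => exact ih h
  | imp C D ih1 ih2 =>
    simp only [Fml.rename, Fml.free, Finset.mem_union] at h ⊢
    rcases h with h | h
    · rcases ih1 h with h | h; · left; exact h
      · right; exact ⟨Or.inl h.1, h.2⟩
    · rcases ih2 h with h | h; · left; exact h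
      · right; exact ⟨Or.inr h.1, h.2⟩
  | box C ih => exact ih h
  | all x C ih =>
    by_cases hxu : x = u
    · subst hxu
      simp only [Fml.rename, if_pos rfl, ↓reduceIte, Fml.free, Finset.mem_erase] at h ⊢
      right; exact ⟨h, h.1⟩
    · simp only [Fml.rename, if_neg hxu, Fml.free, Finset.mem_erase] at h ⊢
      obtain ⟨hax, h⟩ := h
      rcases ih h with h | h
      · left; exact h
      · right; exact ⟨⟨hax, h.1⟩, h.2⟩
  | _ => simp [Fml.rename, Fml.free] at h

theorem not_mem_free_rename {B : Fml} {u v : ℕ} (huv : u ≠ v) :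
    u ∉ (B.rename u v).free := fun h => by
  rcases mem_free_rename h with h | h
  · exact huv h
  · exact h.2 rfl

end Aux
end PML
namespace PML
namespace Aux
open Fml

variable {Ext : Fml → Prop}

/-- Every formula is provably equivalent to one whose bound variables avoid `S`. -/
theorem freshen (B : Fml) (S : Finset ℕ) :
    ∃ B' : Fml, Prf Ext (B.imp B') ∧ Prf Ext (B'.imp B) ∧
      B'.free ⊆ B.free ∧ ∀ x ∈ B'.bound, x ∉ S := by
  induction B generalizing S with
  | verum => exact ⟨_, pid _, pid _, le_refl _, by simp [Fml.bound]⟩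
  | falsum => exact ⟨_, pid _, pid _, le_refl _, by simp [Fml.bound]⟩
  | pvar q => exact ⟨_, pid _, pid _, le_refl _, by simp [Fml.bound]⟩
  | pred P args => exact ⟨_, pid _, pid _, le_refl _, by simp [Fml.bound]⟩
  | neg C ih =>
    obtain ⟨C', h1, h2, h3, h4⟩ := ih S
    exact ⟨C'.neg, ctr h2, ctr h1, h3, h4⟩
  | imp C D ihC ihD =>
    obtain ⟨C', hc1, hc2, hc3, hc4⟩ := ihC S
    obtain ⟨D', hd1, hd2, hd3, hd4⟩ := ihD S
    refine ⟨C'.imp D', impCongr hc2 hd1, impCongr hc1 hd2, ?_, ?_⟩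
    · simp only [Fml.free]
      exact Finset.union_subset_union hc3 hd3
    · intro x hx
      simp only [Fml.bound, Finset.mem_union] at hx
      rcases hx with hx | hx
      · exact hc4 x hx
      · exact hd4 x hx
  | box C ih =>
    obtain ⟨C', h1, h2, h3, h4⟩ := ih S
    exact ⟨C'.box, boxK h1, boxK h2, h3, h4⟩
  | all w C ih =>
    obtain ⟨C', h1, h2, h3, h4⟩ := ih (insert w S)
    have hwb : w ∉ C'.bound := fun h => h4 w h (Finset.mem_insert_self w S)
    obtain ⟨w', hw'⟩ := Infinite.exists_notMem_finset
      (C'.free ∪ C'.bound ∪ S ∪ {w})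
    simp only [Finset.mem_union, Finset.mem_singleton, not_or] at hw'
    obtain ⟨⟨⟨hw'f, hw'b⟩, hw'S⟩, hw'w⟩ := hw'
    refine ⟨Fml.all w' (C'.rename w w'), ?_, ?_, ?_, ?_⟩
    · -- ∀w C → ∀w' C'[w↦w']
      refine ptrans (allK' w h1) ?_
      have e1 : Prf Ext ((Fml.all w C').imp (C'.rename w w')) :=
        Prf.ax (Ax.allE C' w w' hw'b)
      have e4 : Prf Ext ((Fml.all w C').imp (Fml.all w' (Fml.all w C'))) := by
        refine Prf.ax (Ax.allV _ w' ?_)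
        simp only [Fml.free, Finset.mem_erase]
        exact fun h => hw'f h.2
      exact ptrans e4 (Prf.mp (Prf.ax (Ax.allK _ _ w')) (Prf.gen w' e1))
    · -- ∀w' C'[w↦w'] → ∀w C
      refine ptrans ?_ (allK' w h2)
      have f1 : Prf Ext ((Fml.all w' (C'.rename w w')).imp C') := by
        have := Prf.ax (Ext := Ext)
          (Ax.allE (C'.rename w w') w' w (by rw [bound_rename]; exact hwb))
        rwa [rename_rename_cancel hw'f hw'b hw'w] at this
      have f4 : Prf Ext ((Fml.all w' (C'.rename w w')).imp
          (Fml.all w (Fml.all w' (C'.rename w w')))) := by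
        refine Prf.ax (Ax.allV _ w ?_)
        simp only [Fml.free, Finset.mem_erase]
        exact fun h => not_mem_free_rename (fun e => hw'w e.symm) h.2
      exact ptrans f4 (Prf.mp (Prf.ax (Ax.allK _ _ w)) (Prf.gen w f1))
    · intro a ha
      simp only [Fml.free, Finset.mem_erase] at ha ⊢
      obtain ⟨haw', ha⟩ := ha
      rcases mem_free_rename ha with h | h
      · exact absurd h haw'
      · exact ⟨h.2, h3 h.1⟩
    · intro x hx
      simp only [Fml.bound, Finset.mem_insert, bound_rename] at hx
      rcases hx with hx | hx
      · exact hx ▸ hw'S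
      · exact fun h => h4 x hx (Finset.mem_insert_of_mem h)

/-- Universal instantiation: `⊢ ∀u B → B`. -/
theorem spec (B : Fml) (u : ℕ) : Prf Ext ((Fml.all u B).imp B) := by
  obtain ⟨B', h1, h2, _, h4⟩ := freshen (Ext := Ext) B {u}
  have hub : u ∉ B'.bound := fun h => h4 u h (Finset.mem_singleton_self u)
  have g2 : Prf Ext ((Fml.all u B').imp B') := by
    have := Prf.ax (Ext := Ext) (Ax.allE B' u u hub)
    rwa [rename_self] at this
  exact ptrans (ptrans (allK' u h1) g2) h2

end Aux
end PML
namespace PML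
namespace Aux
open Fml

theorem top_self : QGL (Fml.verum.imp Fml.verum.box) :=
  Prf.mp (Prf.ax (Ax.imp1 Fml.verum.box Fml.verum)) (Prf.nec (Prf.ax Ax.verum))

/-- GL's transitivity axiom `4`, from Löb's axiom. -/
theorem four (A : Fml) : QGL (A.box.imp A.box.box) := by
  have s1 : QGL ((A.land A.box).imp A) := and_left _ _
  have s2 : QGL ((A.land A.box).imp A.box) := and_right _ _
  have a : QGL (A.imp ((A.land A.box).box.imp (A.land A.box))) := by
    show Hyp AxL [] (A.imp ((A.land A.box).box.imp (A.land A.box)))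
    refine Hyp.intro' (Hyp.intro' ?_)
    exact Hyp.mp (Hyp.mp (Hyp.weaken (pair A A.box)) (Hyp.assum (A := A) (by simp)))
      (Hyp.mp (Hyp.weaken (boxK s1)) (Hyp.assum (A := (A.land A.box).box) (by simp)))
  have b : QGL (A.box.imp (A.land A.box).box) :=
    ptrans (boxK a) (Prf.ext (AxL.lob (A.land A.box)))
  exact ptrans b (boxK s2)

theorem land_self {A B : Fml} (hA : QGL (A.imp A.box)) (hB : QGL (B.imp B.box)) :
    QGL ((A.land B).imp (A.land B).box) := by
  have t1 : QGL ((A.land B).imp A.box) := ptrans (and_left A B) hA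
  have t2 : QGL ((A.land B).imp B.box) := ptrans (and_right A B) hB
  have bp : QGL (A.box.imp (B.box.imp (A.land B).box)) :=
    ptrans (boxK (pair A B)) (Prf.ax (Ax.k B (A.land B)))
  show Hyp AxL [] ((A.land B).imp (A.land B).box)
  refine Hyp.intro' ?_
  exact Hyp.mp
    (Hyp.mp (Hyp.weaken bp) (Hyp.mp (Hyp.weaken t1) (Hyp.assum (A := A.land B) (by simp))))
    (Hyp.mp (Hyp.weaken t2) (Hyp.assum (A := A.land B) (by simp)))

theorem lor_self {A B : Fml} (hA : QGL (A.imp A.box)) (hB : QGL (B.imp B.box)) :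
    QGL ((A.lor B).imp (A.lor B).box) :=
  por_elim (ptrans hA (boxK (inl A B))) (ptrans hB (boxK (inr A B)))

theorem ex_self {A : Fml} (u : ℕ) (h : QGL (A.imp A.box)) :
    QGL ((Fml.ex u A).imp (Fml.ex u A).box) := by
  have aE : QGL (A.imp (Fml.ex u A)) := ptrans (dni A) (ctr (spec A.neg u))
  have c : QGL (A.box.imp (Fml.ex u A).box) := boxK aE
  have x1 : QGL ((Fml.ex u A).box.neg.imp (Fml.all u (Fml.ex u A).box.neg)) := by
    refine Prf.ax (Ax.allV _ u ?_)
    simp [Fml.ex, Fml.free]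
  have x2 : QGL ((Fml.all u (Fml.ex u A).box.neg).imp (Fml.all u A.box.neg)) :=
    allK' u (ctr c)
  have x3 : QGL ((Fml.all u A.box.neg).imp (Fml.all u A.neg)) := allK' u (ctr h)
  have g : QGL ((Fml.all u A.neg).neg.imp (Fml.ex u A).box.neg.neg) :=
    ctr (ptrans (ptrans x1 x2) x3)
  exact ptrans g (dne (Fml.ex u A).box)

theorem sigma_self : ∀ A : Fml, IsSigma A → QGL (A.imp A.box) := by
  intro A hA
  induction hA with
  | box B => exact four B
  | lor _ _ ih1 ih2 => exact lor_self ih1 ih2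
  | land _ _ ih1 ih2 => exact land_self ih1 ih2
  | ex u _ ih => exact ex_self u ih

end Aux
end PML
open PML PML.Fml in
/-- every Σ-formula is a self-prover in QGL; ⊤ and boxed formulas are
self-provers and self-provers are closed under ∧, ∨, ∃. -/
theorem stmt7 :
    (∀ A : Fml, IsSigma A → QGL (A.imp A.box)) ∧
    QGL (Fml.verum.imp Fml.verum.box) ∧
    (∀ A : Fml, QGL (A.box.imp A.box.box)) ∧
    (∀ A B : Fml, QGL (A.imp A.box) → QGL (B.imp B.box) →
      QGL ((A.land B).imp (A.land B).box)) ∧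
    (∀ A B : Fml, QGL (A.imp A.box) → QGL (B.imp B.box) →
      QGL ((A.lor B).imp (A.lor B).box)) ∧
    (∀ (A : Fml) (u : ℕ), QGL (A.imp A.box) →
      QGL ((Fml.ex u A).imp (Fml.ex u A).box)) := by
  exact ⟨PML.Aux.sigma_self, PML.Aux.top_self, PML.Aux.four,
    fun _ _ => PML.Aux.land_self, fun _ _ => PML.Aux.lor_self,
    fun _ u h => PML.Aux.ex_self u h⟩
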